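/- Let Σ = AᵀA with columns a₁,...,aₙ ∈ ℝᵐ of A, and 0 ≤ ρ < Σ₁₁ = max_i ‖a_i‖₂². Then φ(ρ) := max{xᵀΣx − ρ·Card(x) : ‖x‖₂ = 1} equals max over unit vectors ξ ∈ ℝᵐ of Σ_{i=1}ⁿ ((a_iᵀξ)² − ρ)₊, where (t)₊ = max(t,0). -/
import Mathlib

open Matrix
open scoped BigOperators

noncomputable def card {n : ℕ} (x : Fin n → ℝ) : ℕ := Set.ncard {i | x i ≠ 0}

lemma card_eq_filter {n : ℕ} (x : Fin n → ℝ) :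
    card x = (Finset.univ.filter fun i => x i ≠ 0).card := by
  rw [card, show {i | x i ≠ 0} = ↑(Finset.univ.filter fun i => x i ≠ 0) by ext i; simp]
  exact Set.ncard_coe_finset _

lemma quad {m n : ℕ} (A : Matrix (Fin m) (Fin n) ℝ) (x : Fin n → ℝ) :
    x ⬝ᵥ (Aᵀ * A).mulVec x = ∑ j, (∑ i, A j i * x i) ^ 2 := by
  rw [← Matrix.mulVec_mulVec, Matrix.dotProduct_mulVec, Matrix.vecMul_transpose]
  simp [dotProduct, Matrix.mulVec, sq]

lemma swap_sum {m n : ℕ} (A : Matrix (Fin m) (Fin n) ℝ) (x : Fin n → ℝ) (ξ : Fin m → ℝ) :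
    ∑ j, ξ j * (∑ i, A j i * x i) = ∑ i, x i * (∑ j, A j i * ξ j) := by
  simp_rw [Finset.mul_sum]
  rw [Finset.sum_comm]
  exact Finset.sum_congr rfl fun i _ => Finset.sum_congr rfl fun j _ => by ring

/-- for `Σ = AᵀA` with columns `a_i` and `0 ≤ ρ < Σ₁₁ = max_i ‖a_i‖₂²`,
`φ(ρ) = max_{‖ξ‖₂ = 1} ∑ i, ((a_iᵀξ)² − ρ)₊`. -/
theorem stmt9 {m n : ℕ} (A : Matrix (Fin m) (Fin n) ℝ) (ρ : ℝ) (hρ0 : 0 ≤ ρ)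
    (hρ1 : ∃ i, ρ < ∑ j, (A j i) ^ 2) :
    sSup {v | ∃ x : Fin n → ℝ, (∑ i, x i ^ 2) = 1 ∧
        v = x ⬝ᵥ (Aᵀ * A).mulVec x - ρ * (card x : ℝ)} =
      sSup {v | ∃ ξ : Fin m → ℝ, (∑ j, ξ j ^ 2) = 1 ∧
        v = ∑ i, max ((∑ j, A j i * ξ j) ^ 2 - ρ) 0} := by
  obtain ⟨i₀, hi₀⟩ := hρ1
  set S1 : Set ℝ := {v | ∃ x : Fin n → ℝ, (∑ i, x i ^ 2) = 1 ∧
      v = x ⬝ᵥ (Aᵀ * A).mulVec x - ρ * (card x : ℝ)} with hS1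
  set S2 : Set ℝ := {v | ∃ ξ : Fin m → ℝ, (∑ j, ξ j ^ 2) = 1 ∧
      v = ∑ i, max ((∑ j, A j i * ξ j) ^ 2 - ρ) 0} with hS2
  set T : ℝ := ∑ i : Fin n, ∑ j : Fin m, (A j i) ^ 2 with hT
  -- m is positive
  have hm : 0 < m := by
    rcases Nat.eq_zero_or_pos m with h | h
    · subst h; simp at hi₀; linarith
    · exact h
  -- bounds
  have hbdd1 : ∀ v ∈ S1, v ≤ T := by
    rintro v ⟨x, hx, rfl⟩
    rw [quad]
    have h1 : ∀ j : Fin m, (∑ i, A j i * x i) ^ 2 ≤ ∑ i, (A j i) ^ 2 := by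
      intro j
      calc (∑ i, A j i * x i) ^ 2
          ≤ (∑ i, (A j i) ^ 2) * ∑ i, (x i) ^ 2 :=
            Finset.sum_mul_sq_le_sq_mul_sq _ _ _
        _ = ∑ i, (A j i) ^ 2 := by rw [hx, mul_one]
    calc (∑ j, (∑ i, A j i * x i) ^ 2) - ρ * (card x : ℝ)
        ≤ ∑ j, (∑ i, A j i * x i) ^ 2 := by
          have : 0 ≤ ρ * (card x : ℝ) := mul_nonneg hρ0 (Nat.cast_nonneg _)
          linarith
      _ ≤ ∑ j : Fin m, ∑ i : Fin n, (A j i) ^ 2 := Finset.sum_le_sum fun j _ => h1 j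
      _ = T := Finset.sum_comm
  have hbdd2 : ∀ v ∈ S2, v ≤ T := by
    rintro v ⟨ξ, hξ, rfl⟩
    refine Finset.sum_le_sum fun i _ => ?_
    have h1 : (∑ j, A j i * ξ j) ^ 2 ≤ ∑ j, (A j i) ^ 2 := by
      calc (∑ j, A j i * ξ j) ^ 2
          ≤ (∑ j, (A j i) ^ 2) * ∑ j, (ξ j) ^ 2 :=
            Finset.sum_mul_sq_le_sq_mul_sq _ _ _
        _ = ∑ j, (A j i) ^ 2 := by rw [hξ, mul_one]
    have h2 : (0:ℝ) ≤ ∑ j, (A j i) ^ 2 := Finset.sum_nonneg fun j _ => sq_nonneg _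
    exact max_le (by linarith) h2
  have hBdd1 : BddAbove S1 := ⟨T, fun v hv => hbdd1 v hv⟩
  have hBdd2 : BddAbove S2 := ⟨T, fun v hv => hbdd2 v hv⟩
  -- the basis element x₀ = e_{i₀}
  set x₀ : Fin n → ℝ := fun i => if i = i₀ then 1 else 0 with hx₀
  have hx₀sum : (∑ i, x₀ i ^ 2) = 1 := by simp [hx₀, apply_ite (· ^ 2)]
  have hcardx₀ : card x₀ = 1 := by
    rw [card_eq_filter]
    have : (Finset.univ.filter fun i => x₀ i ≠ 0) = {i₀} := by
      ext i
      simp only [Finset.mem_filter, Finset.mem_univ, true_and, Finset.mem_singleton, hx₀]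
      by_cases h : i = i₀ <;> simp [h]
    rw [this, Finset.card_singleton]
  have hval₀ : x₀ ⬝ᵥ (Aᵀ * A).mulVec x₀ - ρ * (card x₀ : ℝ) = (∑ j, (A j i₀) ^ 2) - ρ := by
    rw [quad, hcardx₀]
    simp [hx₀, mul_ite, Finset.sum_ite_eq']
  have hmem₀ : ((∑ j, (A j i₀) ^ 2) - ρ) ∈ S1 := ⟨x₀, hx₀sum, hval₀.symm⟩
  -- nonempty S2
  have hne2 : S2.Nonempty := by
    refine ⟨_, fun j => if j = ⟨0, hm⟩ then 1 else 0, by simp [apply_ite (· ^ 2)], rfl⟩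
  have hne1 : S1.Nonempty := ⟨_, hmem₀⟩
  apply le_antisymm
  · -- sSup S1 ≤ sSup S2
    refine csSup_le hne1 ?_
    rintro v ⟨x, hx, rfl⟩
    rw [quad]
    set y : Fin m → ℝ := fun j => ∑ i, A j i * x i with hy
    by_cases hy0 : (∑ j, y j ^ 2) = 0
    · -- value ≤ 0 ≤ any element of S2
      obtain ⟨w, ξ, hξ, hw⟩ := hne2
      have hw0 : 0 ≤ w := hw ▸ Finset.sum_nonneg fun i _ => le_max_right _ _
      have : (∑ j, y j ^ 2) - ρ * (card x : ℝ) ≤ w := by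
        have : 0 ≤ ρ * (card x : ℝ) := mul_nonneg hρ0 (Nat.cast_nonneg _)
        rw [hy0]; linarith
      exact this.trans (le_csSup hBdd2 ⟨ξ, hξ, hw⟩)
    · -- normalize y
      have hysq : 0 < ∑ j, y j ^ 2 :=
        lt_of_le_of_ne (Finset.sum_nonneg fun j _ => sq_nonneg _) (Ne.symm hy0)
      set N : ℝ := Real.sqrt (∑ j, y j ^ 2) with hN
      have hNpos : 0 < N := Real.sqrt_pos.2 hysq
      have hN2 : N ^ 2 = ∑ j, y j ^ 2 := Real.sq_sqrt hysq.le
      set ξ : Fin m → ℝ := fun j => y j / N with hξdef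
      have hξ : (∑ j, ξ j ^ 2) = 1 := by
        simp only [hξdef, div_pow]
        rw [← Finset.sum_div, ← hN2, div_self (by positivity)]
      set c : Fin n → ℝ := fun i => ∑ j, A j i * ξ j with hc
      set s : Finset (Fin n) := Finset.univ.filter fun i => x i ≠ 0 with hs
      -- ξᵀ y = N
      have hξy : ∑ j, ξ j * y j = N := by
        simp only [hξdef, div_mul_eq_mul_div, ← sq]
        rw [← Finset.sum_div, ← hN2, sq, mul_div_assoc, div_self hNpos.ne', mul_one]
      have hξy2 : ∑ j, ξ j * y j = ∑ i ∈ s, x i * c i := by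
        rw [hy, swap_sum]
        rw [show (∑ i, x i * c i) = ∑ i ∈ s, x i * c i from
          (Finset.sum_filter_of_ne fun i _ h => by
            intro hxi; exact h (by rw [hxi, zero_mul])).symm]
      -- Cauchy-Schwarz on s
      have hCS : N ^ 2 ≤ ∑ i ∈ s, c i ^ 2 := by
        have h1 : (∑ i ∈ s, x i * c i) ^ 2 ≤ (∑ i ∈ s, x i ^ 2) * ∑ i ∈ s, c i ^ 2 :=
          Finset.sum_mul_sq_le_sq_mul_sq _ _ _
        have h2 : (∑ i ∈ s, x i ^ 2) ≤ 1 := by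
          rw [← hx]; exact Finset.sum_le_sum_of_subset_of_nonneg (Finset.filter_subset _ _)
            fun i _ _ => sq_nonneg _
        have h3 : (0:ℝ) ≤ ∑ i ∈ s, c i ^ 2 := Finset.sum_nonneg fun i _ => sq_nonneg _
        calc N ^ 2 = (∑ i ∈ s, x i * c i) ^ 2 := by rw [← hξy2, hξy]
          _ ≤ (∑ i ∈ s, x i ^ 2) * ∑ i ∈ s, c i ^ 2 := h1
          _ ≤ 1 * ∑ i ∈ s, c i ^ 2 := mul_le_mul_of_nonneg_right h2 h3
          _ = ∑ i ∈ s, c i ^ 2 := one_mul _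
      have hcard : (card x : ℝ) = (s.card : ℝ) := by rw [card_eq_filter x]
      have hfinal : (∑ j, y j ^ 2) - ρ * (card x : ℝ) ≤ ∑ i, max (c i ^ 2 - ρ) 0 := by
        calc (∑ j, y j ^ 2) - ρ * (card x : ℝ)
            ≤ (∑ i ∈ s, c i ^ 2) - ρ * s.card := by rw [← hN2, hcard]; linarith [hCS]
          _ = ∑ i ∈ s, (c i ^ 2 - ρ) := by
              rw [Finset.sum_sub_distrib, Finset.sum_const, nsmul_eq_mul, mul_comm]
          _ ≤ ∑ i ∈ s, max (c i ^ 2 - ρ) 0 :=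
              Finset.sum_le_sum fun i _ => le_max_left _ _
          _ ≤ ∑ i, max (c i ^ 2 - ρ) 0 :=
              Finset.sum_le_sum_of_subset_of_nonneg (Finset.filter_subset _ _)
                fun i _ _ => le_max_right _ _
      exact hfinal.trans (le_csSup hBdd2 ⟨ξ, hξ, rfl⟩)
  · -- sSup S2 ≤ sSup S1
    refine csSup_le hne2 ?_
    rintro v ⟨ξ, hξ, rfl⟩
    set c : Fin n → ℝ := fun i => ∑ j, A j i * ξ j with hc
    set I : Finset (Fin n) := Finset.univ.filter fun i => ρ < c i ^ 2 with hI
    have hsplit : (∑ i, max (c i ^ 2 - ρ) 0) = ∑ i ∈ I, (c i ^ 2 - ρ) := by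
      rw [← Finset.sum_filter_add_sum_filter_not Finset.univ (fun i => ρ < c i ^ 2)]
      have h1 : ∀ i ∈ I, max (c i ^ 2 - ρ) 0 = c i ^ 2 - ρ := fun i hi =>
        max_eq_left (by have := (Finset.mem_filter.1 hi).2; linarith)
      have h2 : ∀ i ∈ Finset.univ.filter fun i => ¬ ρ < c i ^ 2,
          max (c i ^ 2 - ρ) 0 = 0 := fun i hi =>
        max_eq_right (by have := not_lt.1 (Finset.mem_filter.1 hi).2; linarith)
      rw [Finset.sum_congr rfl h1, Finset.sum_congr rfl h2, Finset.sum_const_zero, add_zero]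
    rcases Finset.eq_empty_or_nonempty I with hIe | hIne
    · rw [hsplit, hIe, Finset.sum_empty]
      have : (0:ℝ) ≤ (∑ j, (A j i₀) ^ 2) - ρ := by linarith
      exact this.trans (le_csSup hBdd1 hmem₀)
    · set S : ℝ := ∑ i ∈ I, c i ^ 2 with hSdef
      have hcpos : ∀ i ∈ I, 0 < c i ^ 2 := fun i hi =>
        lt_of_le_of_lt hρ0 (Finset.mem_filter.1 hi).2
      have hSpos : 0 < S := Finset.sum_pos hcpos hIne
      set R : ℝ := Real.sqrt S with hR
      have hRpos : 0 < R := Real.sqrt_pos.2 hSpos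
      have hR2 : R ^ 2 = S := Real.sq_sqrt hSpos.le
      set x : Fin n → ℝ := fun i => if i ∈ I then c i / R else 0 with hxdef
      have hxsum : (∑ i, x i ^ 2) = 1 := by
        have hxsq : ∀ i, x i ^ 2 = if i ∈ I then (c i / R) ^ 2 else 0 := fun i => by
          by_cases h : i ∈ I <;> simp [hxdef, h]
        rw [Finset.sum_congr rfl fun i _ => hxsq i, Finset.sum_ite_mem,
          Finset.univ_inter]
        simp_rw [div_pow]
        rw [← Finset.sum_div, ← hSdef, ← hR2, div_self (by positivity)]
      have hcardx : (card x : ℝ) = I.card := by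
        rw [card_eq_filter]
        congr 2
        ext i
        simp only [Finset.mem_filter, Finset.mem_univ, true_and, hxdef]
        constructor
        · intro h
          by_contra hiI
          exact h (by simp [hiI])
        · intro hiI
          have hc0 : c i ≠ 0 := fun h0 => by
            have := (Finset.mem_filter.1 hiI).2
            rw [h0] at this; simp at this; linarith
          simp [hiI, div_eq_zero_iff, hc0, hRpos.ne']
      have hξAx : ∑ j, ξ j * (∑ i, A j i * x i) = R := by
        rw [swap_sum]
        have : (∑ i, x i * c i) = ∑ i ∈ I, c i ^ 2 / R := by
          have hxc : ∀ i, x i * c i = if i ∈ I then c i ^ 2 / R else 0 := fun i => by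
            by_cases h : i ∈ I <;>
              simp [hxdef, h, div_mul_eq_mul_div, sq]
          rw [Finset.sum_congr rfl fun i _ => hxc i, Finset.sum_ite_mem,
            Finset.univ_inter]
        rw [this, ← Finset.sum_div, ← hSdef, ← hR2, sq, mul_div_assoc,
          div_self hRpos.ne', mul_one]
      have hCS : S ≤ ∑ j, (∑ i, A j i * x i) ^ 2 := by
        have h1 : (∑ j, ξ j * (∑ i, A j i * x i)) ^ 2
            ≤ (∑ j, ξ j ^ 2) * ∑ j, (∑ i, A j i * x i) ^ 2 :=
          Finset.sum_mul_sq_le_sq_mul_sq _ _ _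
        rw [hξAx, hR2, hξ, one_mul] at h1
        exact h1
      have hval : (∑ i, max (c i ^ 2 - ρ) 0)
          ≤ x ⬝ᵥ (Aᵀ * A).mulVec x - ρ * (card x : ℝ) := by
        rw [quad, hsplit, hcardx]
        have : (∑ i ∈ I, (c i ^ 2 - ρ)) = S - ρ * I.card := by
          rw [Finset.sum_sub_distrib, Finset.sum_const, nsmul_eq_mul, mul_comm, hSdef]
        rw [this]
        linarith [hCS]
      exact hval.trans (le_csSup hBdd1 ⟨x, hxsum, rfl⟩)
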